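/- Let B be a complete Boolean algebra and A a maximal antichain. Suppose F and G are filters on B based on A, f : A → A is a bijection with f = f⁻¹ such that for every X ⊆ A, ⋁X ∈ F iff ⋁f[X] ∈ G. If z ∈ B is such that G ∪ {z} has the finite intersection property, and W = {a ∈ A : f(a) ∧ z > 0}, then F ∪ {⋁W} has the finite intersection property. -/

import Mathlib

/-- A (proper) filter on a Boolean algebra, as a set. -/
def IsBAFilter {B : Type*} [BooleanAlgebra B] (F : Set B) : Prop :=
  ⊤ ∈ F ∧ ⊥ ∉ F ∧ (∀ x ∈ F, ∀ y : B, x ≤ y → y ∈ F) ∧ ∀ x ∈ F, ∀ y ∈ F, x ⊓ y ∈ F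

/-- A maximal antichain in a complete Boolean algebra. -/
def IsBAMaxAntichain {B : Type*} [CompleteBooleanAlgebra B] (A : Set B) : Prop :=
  (∀ x ∈ A, x ≠ ⊥) ∧ (A.Pairwise fun x y => x ⊓ y = ⊥) ∧ sSup A = ⊤

/-- A filter `F` is based on a maximal antichain `A` if for every `u ∈ F`,
`⋁{a ∈ A : a ≤ u} ∈ F`. -/
def BasedOn {B : Type*} [CompleteBooleanAlgebra B] (F A : Set B) : Prop :=
  ∀ u ∈ F, sSup {x : B | x ∈ A ∧ x ≤ u} ∈ F

lemma finset_inf_mem {B : Type*} [BooleanAlgebra B] {F : Set B} (hF : IsBAFilter F)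
    (Q : Finset B) (hQ : (↑Q : Set B) ⊆ F) : Q.inf id ∈ F := by
  classical
  induction Q using Finset.induction with
  | empty => simpa using hF.1
  | insert _ _ _ ih =>
    rename_i a s _
    rw [Finset.coe_insert, Set.insert_subset_iff] at hQ
    rw [Finset.inf_insert]
    exact hF.2.2.2 _ hQ.1 _ (ih hQ.2)

/-- If `F`, `G` are filters based on a maximal antichain `A`, `f : A → A` is
an involutive bijection with `⋁X ∈ F ↔ ⋁f[X] ∈ G` for all `X ⊆ A`, and
`G ∪ {z}` has the finite intersection property, then for
`W = {a ∈ A : f(a) ∧ z > 0}` the family `F ∪ {⋁W}` has the finite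
intersection property. -/
theorem stmt_19 {B : Type*} [CompleteBooleanAlgebra B] (F G : Set B)
    (hF : IsBAFilter F) (hG : IsBAFilter G)
    (A : Set B) (hA : IsBAMaxAntichain A)
    (hFb : BasedOn F A) (hGb : BasedOn G A)
    (f : B → B) (hbij : Set.BijOn f A A) (hinv : ∀ x ∈ A, f (f x) = x)
    (hcorr : ∀ X ⊆ A, sSup X ∈ F ↔ sSup (f '' X) ∈ G)
    (z : B) (hz : ∀ Q : Finset B, (↑Q : Set B) ⊆ insert z G → Q.inf id ≠ ⊥) :
    ∀ Q : Finset B, (↑Q : Set B) ⊆ insert (sSup {x : B | x ∈ A ∧ f x ⊓ z ≠ ⊥}) F →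
      Q.inf id ≠ ⊥ := by
  classical
  set s : B := sSup {x : B | x ∈ A ∧ f x ⊓ z ≠ ⊥} with hs
  intro Q hQ hbot
  set u : B := (Q.erase s).inf id with hu
  have huF : u ∈ F := by
    apply finset_inf_mem hF
    intro x hx
    rcases Finset.mem_erase.mp hx with ⟨hne, hxQ⟩
    rcases hQ hxQ with h | h
    · exact absurd h hne
    · exact h
  have hle : s ⊓ u ≤ Q.inf id := by
    apply Finset.le_inf
    intro q hq
    by_cases hq' : q = s
    · subst hq'; exact inf_le_left
    · exact le_trans inf_le_right (Finset.inf_le (Finset.mem_erase.mpr ⟨hq', hq⟩))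
  have hsu : s ⊓ u = ⊥ := le_bot_iff.mp (hbot ▸ hle)
  -- X = {a ∈ A : a ≤ u}
  set X : Set B := {x : B | x ∈ A ∧ x ≤ u} with hX
  have hXA : X ⊆ A := fun x hx => hx.1
  have hsX : sSup X ∈ F := hFb u huF
  have hGX : sSup (f '' X) ∈ G := (hcorr X hXA).mp hsX
  have hdisj : ∀ a ∈ X, f a ⊓ z = ⊥ := by
    intro a ha
    by_contra hne
    have haW : a ≤ s := le_sSup ⟨ha.1, hne⟩
    have : a ≤ ⊥ := hsu ▸ le_inf haW ha.2
    exact hA.1 a ha.1 (le_bot_iff.mp this)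
  have hkey : sSup (f '' X) ⊓ z = ⊥ := by
    rw [sSup_inf_eq]
    apply le_bot_iff.mp
    apply iSup₂_le
    rintro y ⟨a, ha, rfl⟩
    exact (hdisj a ha).le
  have := hz (insert (sSup (f '' X)) {z}) (by
    intro x hx
    simp only [Finset.coe_insert, Finset.coe_singleton, Set.mem_insert_iff,
      Set.mem_singleton_iff] at hx
    rcases hx with rfl | rfl
    · exact Set.mem_insert_iff.mpr (Or.inr hGX)
    · exact Set.mem_insert _ _)
  apply this
  simpa using hkey
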